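/- arXiv:math/9907162 — 5 statements merged into one kernel-verified Lean document; each statement's English description precedes it below -/
import Mathlib

section
/- Let U be an open connected subset of ℝ², and let x₁, x₂ ∈ ∂U be two distinct boundary points, each accessible from U. Then there exists a continuous injective map ψ : [0,1] → closure(U) with ψ(0) = x₁, ψ(1) = x₂, and ψ((0,1)) ⊆ U. -/
open Set unitInterval in
lemma junction {X : Type*} [TopologicalSpace X] [T2Space X]
    {α β : unitInterval → X} (hαc : Continuous α) (hαi : Function.Injective α)
    (hβc : Continuous β) (hβi : Function.Injective β)
    (hmem : α 1 ∈ Set.range β) (hne : α 0 ≠ β 1) :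
    ∃ ψ : unitInterval → X, Continuous ψ ∧ Function.Injective ψ ∧
      ψ 0 = α 0 ∧ ψ 1 = β 1 ∧
      ∀ u : unitInterval, 0 < (u:ℝ) → (u:ℝ) < 1 →
        (∃ v : unitInterval, 0 < (v:ℝ) ∧ ψ u = α v) ∨
        (∃ v : unitInterval, (v:ℝ) < 1 ∧ ψ u = β v) := by
  classical
  set T : Set unitInterval := α ⁻¹' Set.range β with hT
  have hTc : IsClosed T := ((isCompact_range hβc).isClosed).preimage hαc
  have hT1 : (1 : unitInterval) ∈ T := hmem
  obtain ⟨t, htT, htmin⟩ := (hTc.isCompact).exists_isLeast ⟨1, hT1⟩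
  obtain ⟨s, hs⟩ := htT
  -- hs : β s = α t
  by_cases hs1 : s = 1
  · -- α t = β 1, use α restricted to [0, t]
    have ht0 : 0 < (t : ℝ) := by
      rcases eq_or_lt_of_le t.2.1 with h | h
      · exfalso
        have : t = 0 := by ext; exact h.symm
        exact hne (by rw [← this, ← hs, hs1])
      · exact h
    set g0 : unitInterval → unitInterval := fun u =>
      ⟨(u : ℝ) * t, mul_nonneg u.2.1 t.2.1, le_trans (mul_le_one₀ u.2.2 t.2.1 t.2.2) le_rfl⟩
      with hg0
    have hg01 : g0 1 = t := by ext; simp [hg0]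
    have hg00 : g0 0 = 0 := by ext; simp [hg0]
    refine ⟨fun u => α (g0 u), ?_, ?_, ?_, ?_, ?_⟩
    · exact hαc.comp (Continuous.subtype_mk (continuous_subtype_val.mul continuous_const) _)
    · intro u v huv
      have : (u : ℝ) * t = (v : ℝ) * t := congrArg Subtype.val (hαi huv)
      ext
      exact mul_right_cancel₀ (ne_of_gt ht0) this
    · show α (g0 0) = α 0
      rw [hg00]
    · show α (g0 1) = β 1
      rw [hg01, ← hs, hs1]
    · intro u hu0 hu1
      exact Or.inl ⟨g0 u, by show (0:ℝ) < (u:ℝ) * t; exact mul_pos hu0 ht0, rfl⟩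
  · have hslt : (s : ℝ) < 1 := lt_of_le_of_ne s.2.2 (fun h => hs1 (by ext; exact h))
    by_cases ht0 : t = 0
    · -- α 0 = β s, use β restricted to [s, 1]
      set g0 : unitInterval → unitInterval := fun u =>
        ⟨(s : ℝ) + (u : ℝ) * (1 - s),
          add_nonneg s.2.1 (mul_nonneg u.2.1 (by linarith [s.2.2])),
          by nlinarith [u.2.1, u.2.2, s.2.1, s.2.2]⟩ with hg0
      have hg00 : g0 0 = s := by ext; simp [hg0]
      have hg01 : g0 1 = 1 := by ext; simp [hg0]
      refine ⟨fun u => β (g0 u), ?_, ?_, ?_, ?_, ?_⟩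
      · exact hβc.comp (Continuous.subtype_mk (by fun_prop) _)
      · intro u v huv
        have : (s : ℝ) + (u : ℝ) * (1 - s) = (s : ℝ) + (v : ℝ) * (1 - s) :=
          congrArg Subtype.val (hβi huv)
        ext
        have h1s : (1 : ℝ) - s ≠ 0 := by linarith
        exact mul_right_cancel₀ h1s (add_left_cancel this)
      · show β (g0 0) = α 0
        rw [hg00, hs, ht0]
      · show β (g0 1) = β 1
        rw [hg01]
      · intro u hu0 hu1
        refine Or.inr ⟨g0 u, ?_, rfl⟩
        show (s : ℝ) + (u : ℝ) * (1 - s) < 1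
        nlinarith [mul_pos (sub_pos.2 hu1) (sub_pos.2 hslt)]
    · have ht0' : 0 < (t : ℝ) := by
        rcases eq_or_lt_of_le t.2.1 with h | h
        · exact absurd (by ext; exact h.symm) ht0
        · exact h
      -- main case: concatenate
      set g1 : unitInterval → unitInterval := fun u =>
        ⟨min (2 * (u : ℝ) * t) t,
          le_min (mul_nonneg (mul_nonneg (by norm_num) u.2.1) t.2.1) t.2.1,
          min_le_of_right_le t.2.2⟩
        with hg1
      set g2 : unitInterval → unitInterval := fun u =>
        ⟨(s : ℝ) + max (2 * (u : ℝ) - 1) 0 * (1 - s),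
          add_nonneg s.2.1 (mul_nonneg (le_max_right _ 0) (by linarith [s.2.2])),
          by nlinarith [s.2.1, s.2.2,
              max_le (by nlinarith [u.2.2] : 2*(u:ℝ)-1 ≤ 1) (by norm_num : (0:ℝ) ≤ 1),
              le_max_right (2*(u:ℝ)-1) (0:ℝ)]⟩
        with hg2
      have hg1le : ∀ u : unitInterval, (u : ℝ) ≤ 1/2 → (g1 u : ℝ) = 2 * u * t := by
        intro u hu
        simp only [hg1]
        exact min_eq_left (by nlinarith [t.2.1])
      have hg2ge : ∀ u : unitInterval, 1/2 ≤ (u : ℝ) → (g2 u : ℝ) = s + (2 * u - 1) * (1 - s) := by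
        intro u hu
        simp only [hg2]
        congr 2
        exact max_eq_left (by linarith)
      refine ⟨fun u => if (u : ℝ) ≤ 1/2 then α (g1 u) else β (g2 u), ?_, ?_, ?_, ?_, ?_⟩
      · apply Continuous.if_le
        · exact hαc.comp (Continuous.subtype_mk
            ((by fun_prop : Continuous fun u : unitInterval => 2*(u:ℝ)*t).min continuous_const) _)
        · exact hβc.comp (Continuous.subtype_mk (by fun_prop) _)
        · exact continuous_subtype_val
        · exact continuous_const
        · intro u hu
          have h1 : g1 u = t := by ext; rw [hg1le u hu.le]; rw [hu]; ring_nf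
          have h2 : g2 u = s := by ext; rw [hg2ge u hu.ge]; rw [hu]; ring_nf
          rw [h1, h2, hs]
      · intro u v huv
        simp only at huv
        by_cases hu : (u : ℝ) ≤ 1/2 <;> by_cases hv : (v : ℝ) ≤ 1/2
        · rw [if_pos hu, if_pos hv] at huv
          have := congrArg Subtype.val (hαi huv)
          rw [hg1le u hu, hg1le v hv] at this
          ext
          have := mul_right_cancel₀ (ne_of_gt ht0') this
          linarith
        · rw [if_pos hu, if_neg hv] at huv
          exfalso
          have hmem' : g1 u ∈ T := ⟨g2 v, huv.symm⟩
          have htle : (t : ℝ) ≤ g1 u := htmin hmem'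
          rw [hg1le u hu] at htle
          have hu2 : (u : ℝ) = 1/2 := by nlinarith [u.2.1]
          have h1 : g1 u = t := by ext; rw [hg1le u hu]; rw [hu2]; ring_nf
          rw [h1, ← hs] at huv
          have := congrArg Subtype.val (hβi huv)
          rw [hg2ge v (by linarith)] at this
          nlinarith
        · rw [if_neg hu, if_pos hv] at huv
          exfalso
          have hmem' : g1 v ∈ T := ⟨g2 u, huv⟩
          have htle : (t : ℝ) ≤ g1 v := htmin hmem'
          rw [hg1le v hv] at htle
          have hv2 : (v : ℝ) = 1/2 := by nlinarith [v.2.1]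
          have h1 : g1 v = t := by ext; rw [hg1le v hv]; rw [hv2]; ring_nf
          rw [h1, ← hs] at huv
          have := congrArg Subtype.val (hβi huv.symm)
          rw [hg2ge u (by linarith)] at this
          nlinarith
        · rw [if_neg hu, if_neg hv] at huv
          have := congrArg Subtype.val (hβi huv)
          rw [hg2ge u (by linarith), hg2ge v (by linarith)] at this
          ext
          have h1s : (0 : ℝ) < 1 - s := by linarith
          nlinarith
      · show (if ((0:unitInterval) : ℝ) ≤ 1/2 then α (g1 0) else β (g2 0)) = α 0
        rw [if_pos (by norm_num : ((0:unitInterval) : ℝ) ≤ 1/2)]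
        congr 1
        ext
        rw [hg1le 0 (by norm_num)]
        norm_num
      · show (if ((1:unitInterval) : ℝ) ≤ 1/2 then α (g1 1) else β (g2 1)) = β 1
        rw [if_neg (by norm_num : ¬ ((1:unitInterval) : ℝ) ≤ 1/2)]
        congr 1
        ext
        rw [hg2ge 1 (by norm_num)]
        norm_num
      · intro u hu0 hu1
        by_cases hu : (u : ℝ) ≤ 1/2
        · left
          refine ⟨g1 u, ?_, ?_⟩
          · rw [hg1le u hu]
            positivity
          · show (if (u : ℝ) ≤ 1/2 then α (g1 u) else β (g2 u)) = α (g1 u)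
            rw [if_pos hu]
        · right
          refine ⟨g2 u, ?_, ?_⟩
          · rw [hg2ge u (by linarith)]
            nlinarith
          · show (if (u : ℝ) ≤ 1/2 then α (g1 u) else β (g2 u)) = β (g2 u)
            rw [if_neg hu]

open Set unitInterval in
lemma segArc {E : Type*} [NormedAddCommGroup E] [NormedSpace ℝ E] {U : Set E} {a b : E}
    (hab : a ≠ b) (hseg : segment ℝ a b ⊆ U) :
    ∃ ψ : unitInterval → E, Continuous ψ ∧ Function.Injective ψ ∧
      ψ 0 = a ∧ ψ 1 = b ∧ ∀ u, ψ u ∈ U := by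
  refine ⟨fun u => a + (u:ℝ) • (b - a), ?_, ?_, by simp, by simp, ?_⟩
  · fun_prop
  · intro u v huv
    have h := add_left_cancel huv
    have h2 : ((u:ℝ) - v) • (b - a) = 0 := by rw [sub_smul, h, sub_self]
    rcases smul_eq_zero.1 h2 with h' | h'
    · ext; linarith [sub_eq_zero.1 h']
    · exact absurd h' (sub_ne_zero.2 (Ne.symm hab))
  · intro u
    apply hseg
    rw [segment_eq_image']
    exact ⟨u, u.2, rfl⟩

open Set unitInterval in
lemma exists_arc_in_open_connected {E : Type*} [NormedAddCommGroup E] [NormedSpace ℝ E]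
    {U : Set E} (hUopen : IsOpen U) (hUconn : IsPreconnected U)
    {a b : E} (ha : a ∈ U) (hb : b ∈ U) (hab : a ≠ b) :
    ∃ ψ : unitInterval → E, Continuous ψ ∧ Function.Injective ψ ∧
      ψ 0 = a ∧ ψ 1 = b ∧ ∀ u, ψ u ∈ U := by
  set R : E → E → Prop := fun x y => segment ℝ x y ⊆ U with hR
  have hreach : Relation.ReflTransGen R a b := by
    set A := {c | c ∈ U ∧ Relation.ReflTransGen R a c} with hA'
    set B := {c | c ∈ U ∧ ¬ Relation.ReflTransGen R a c} with hB'
    have hA : IsOpen A := by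
      rw [Metric.isOpen_iff]
      rintro c ⟨hcU, hcR⟩
      obtain ⟨ε, hε, hball⟩ := Metric.isOpen_iff.1 hUopen c hcU
      refine ⟨ε, hε, fun d hd => ⟨hball hd, hcR.tail ?_⟩⟩
      exact Subset.trans
        ((convex_ball c ε).segment_subset (Metric.mem_ball_self hε) hd) hball
    have hB : IsOpen B := by
      rw [Metric.isOpen_iff]
      rintro c ⟨hcU, hcR⟩
      obtain ⟨ε, hε, hball⟩ := Metric.isOpen_iff.1 hUopen c hcU
      refine ⟨ε, hε, fun d hd => ⟨hball hd, fun hra => hcR (hra.tail ?_)⟩⟩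
      exact Subset.trans
        ((convex_ball c ε).segment_subset hd (Metric.mem_ball_self hε)) hball
    have hdisj : Disjoint A B := Set.disjoint_left.2 fun x hx hx' => hx'.2 hx.2
    have hsub : U ⊆ A ∪ B := by
      intro c hc
      by_cases h : Relation.ReflTransGen R a c
      · exact Or.inl ⟨hc, h⟩
      · exact Or.inr ⟨hc, h⟩
    have := hUconn.subset_left_of_subset_union hA hB hdisj hsub
      ⟨a, ha, ha, Relation.ReflTransGen.refl⟩
    exact (this hb).2
  clear ha hb
  revert hab
  induction hreach using Relation.ReflTransGen.head_induction_on with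
  | refl => intro h; exact absurd rfl h
  | @head x y hrel hrest ih =>
    intro hxb
    by_cases hyb : y = b
    · subst hyb
      exact segArc hxb hrel
    · obtain ⟨β, hβc, hβi, hβ0, hβ1, hβU⟩ := ih hyb
      by_cases hxy : x = y
      · subst hxy
        exact ⟨β, hβc, hβi, hβ0, hβ1, hβU⟩
      · obtain ⟨α, hαc, hαi, hα0, hα1, hαU⟩ := segArc hxy hrel
        obtain ⟨ψ, hψc, hψi, hψ0, hψ1, hψmem⟩ :=
          junction hαc hαi hβc hβi ⟨0, by rw [hβ0, hα1]⟩ (by rw [hα0, hβ1]; exact hxb)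
        refine ⟨ψ, hψc, hψi, by rw [hψ0, hα0], by rw [hψ1, hβ1], ?_⟩
        intro u
        rcases eq_or_lt_of_le u.2.1 with h0 | h0
        · have : u = 0 := by ext; exact h0.symm
          rw [this, hψ0, hα0]
          exact hrel (left_mem_segment ℝ x y)
        rcases eq_or_lt_of_le u.2.2 with h1 | h1
        · have : u = 1 := by ext; exact h1
          rw [this, hψ1, hβ1]
          exact hβ1 ▸ hβU 1
        rcases hψmem u h0 h1 with ⟨v, _, hv⟩ | ⟨v, _, hv⟩
        · rw [hv]; exact hαU v
        · rw [hv]; exact hβU v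

/-- A point `x` of the boundary of `U` is *accessible* from `U` if there is a continuous
injective path in the closure of `U` ending at `x` and otherwise staying in `U`. -/
def Accessible {X : Type*} [TopologicalSpace X] (U : Set X) (x : X) : Prop :=
  ∃ φ : unitInterval → X, Continuous φ ∧ Function.Injective φ ∧
    (∀ t, φ t ∈ closure U) ∧ (∀ t : unitInterval, (t : ℝ) < 1 → φ t ∈ U) ∧ φ 1 = x

/-- Two distinct accessible boundary points of an open connected subset of the plane can
be joined by an arc whose interior lies in the subset. -/
theorem exists_arc_between_accessible_boundary_points
    (U : Set (EuclideanSpace ℝ (Fin 2))) (hUopen : IsOpen U) (hUconn : IsConnected U)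
    (x₁ x₂ : EuclideanSpace ℝ (Fin 2)) (hx₁ : x₁ ∈ frontier U) (hx₂ : x₂ ∈ frontier U)
    (hacc₁ : Accessible U x₁) (hacc₂ : Accessible U x₂) (hne : x₁ ≠ x₂) :
    ∃ ψ : unitInterval → EuclideanSpace ℝ (Fin 2), Continuous ψ ∧ Function.Injective ψ ∧
      (∀ t, ψ t ∈ closure U) ∧ ψ 0 = x₁ ∧ ψ 1 = x₂ ∧
      ∀ t : unitInterval, 0 < (t : ℝ) → (t : ℝ) < 1 → ψ t ∈ U := by
  obtain ⟨φ₁, hφ₁c, hφ₁i, hφ₁cl, hφ₁U, hφ₁1⟩ := hacc₁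
  obtain ⟨φ₂, hφ₂c, hφ₂i, hφ₂cl, hφ₂U, hφ₂1⟩ := hacc₂
  have hx₁U : x₁ ∉ U := by
    intro h
    exact hx₁.2 (by rwa [hUopen.interior_eq])
  -- the reversed first path
  set α₁ : unitInterval → EuclideanSpace ℝ (Fin 2) := fun u => φ₁ (unitInterval.symm u) with hα₁
  have hα₁c : Continuous α₁ := hφ₁c.comp unitInterval.continuous_symm
  have hα₁i : Function.Injective α₁ := hφ₁i.comp (fun u v h => by
    have := congrArg unitInterval.symm h
    rwa [unitInterval.symm_symm, unitInterval.symm_symm] at this)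
  have hα₁0 : α₁ 0 = x₁ := by rw [hα₁]; simp only [unitInterval.symm_zero]; exact hφ₁1
  have hα₁1 : α₁ 1 = φ₁ 0 := by rw [hα₁]; simp only [unitInterval.symm_one]
  have hα₁U : ∀ u : unitInterval, 0 < (u:ℝ) → α₁ u ∈ U := by
    intro u hu
    exact hφ₁U _ (by rw [unitInterval.coe_symm_eq]; linarith)
  have haU : φ₁ 0 ∈ U := hφ₁U 0 (by norm_num)
  have hbU : φ₂ 0 ∈ U := hφ₂U 0 (by norm_num)
  -- θ : arc from x₁ to φ₂ 0 staying in U except at 0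
  have hθ : ∃ θ : unitInterval → EuclideanSpace ℝ (Fin 2), Continuous θ ∧
      Function.Injective θ ∧ θ 0 = x₁ ∧ θ 1 = φ₂ 0 ∧
      ∀ u : unitInterval, 0 < (u:ℝ) → θ u ∈ U := by
    by_cases hab : φ₁ 0 = φ₂ 0
    · exact ⟨α₁, hα₁c, hα₁i, hα₁0, hα₁1.trans hab, hα₁U⟩
    · obtain ⟨γ, hγc, hγi, hγ0, hγ1, hγU⟩ :=
        exists_arc_in_open_connected hUopen hUconn.isPreconnected haU hbU hab
      obtain ⟨θ, hθc, hθi, hθ0, hθ1, hθmem⟩ :=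
        junction hα₁c hα₁i hγc hγi ⟨0, by rw [hγ0, hα₁1]⟩
          (by rw [hα₁0, hγ1]; exact fun h => hx₁U (h ▸ hbU))
      refine ⟨θ, hθc, hθi, hθ0.trans hα₁0, hθ1.trans hγ1, ?_⟩
      intro u hu0
      rcases eq_or_lt_of_le u.2.2 with h1 | h1
      · have : u = 1 := by ext; exact h1
        rw [this, hθ1, hγ1]
        exact hbU
      rcases hθmem u hu0 h1 with ⟨v, hv0, hv⟩ | ⟨v, _, hv⟩
      · rw [hv]; exact hα₁U v hv0
      · rw [hv]; exact hγU v
  obtain ⟨θ, hθc, hθi, hθ0, hθ1, hθU⟩ := hθ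
  obtain ⟨ψ, hψc, hψi, hψ0, hψ1, hψmem⟩ :=
    junction hθc hθi hφ₂c hφ₂i ⟨0, hθ1.symm⟩ (by rw [hθ0, hφ₂1]; exact hne)
  have hψint : ∀ u : unitInterval, 0 < (u:ℝ) → (u:ℝ) < 1 → ψ u ∈ U := by
    intro u hu0 hu1
    rcases hψmem u hu0 hu1 with ⟨v, hv0, hv⟩ | ⟨v, hv1, hv⟩
    · rw [hv]; exact hθU v hv0
    · rw [hv]; exact hφ₂U v hv1
  refine ⟨ψ, hψc, hψi, ?_, hψ0.trans hθ0, hψ1.trans hφ₂1, hψint⟩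
  intro u
  rcases eq_or_lt_of_le u.2.1 with h0 | h0
  · have : u = 0 := by ext; exact h0.symm
    rw [this, hψ0, hθ0]
    exact frontier_subset_closure hx₁
  rcases eq_or_lt_of_le u.2.2 with h1 | h1
  · have : u = 1 := by ext; exact h1
    rw [this, hψ1, hφ₂1]
    exact frontier_subset_closure hx₂
  exact subset_closure (hψint u h0 h1)
end

section
/- Define ρ_K : K × K → ℝ≥0 by ρ_K(x,y) = diam W(x,y), where W(x,y) is the order interval between x and y in the linearly ordered compact set K ⊆ I². Then ρ_K is a metric on K. -/
/-- The order interval `W(x,y) = {z ∈ K : min(x,y) ≤ z ≤ max(x,y)}` of a relation `le`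
on a set `K` in the plane. -/
def ordInterval (K : Set (ℝ × ℝ)) (le : ℝ × ℝ → ℝ × ℝ → Prop) (x y : ℝ × ℝ) :
    Set (ℝ × ℝ) :=
  {z ∈ K | (le x z ∧ le z y) ∨ (le y z ∧ le z x)}

/-- The order-interval-diameter function `ρ_K(x,y) = diam W(x,y)`. -/
noncomputable def rhoK (K : Set (ℝ × ℝ)) (le : ℝ × ℝ → ℝ × ℝ → Prop) (x y : ℝ × ℝ) : ℝ :=
  Metric.diam (ordInterval K le x y)

/-- `ρ_K(x,y) = diam W(x,y)` is a metric on the compact linearly ordered set `K`. -/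
theorem rhoK_is_metric (K : Set (ℝ × ℝ)) (hK : IsCompact K)
    (le : ℝ × ℝ → ℝ × ℝ → Prop)
    (hrefl : ∀ x ∈ K, le x x)
    (hantisymm : ∀ x ∈ K, ∀ y ∈ K, le x y → le y x → x = y)
    (htrans : ∀ x ∈ K, ∀ y ∈ K, ∀ z ∈ K, le x y → le y z → le x z)
    (htotal : ∀ x ∈ K, ∀ y ∈ K, le x y ∨ le y x)
    (hWcompact : ∀ x ∈ K, ∀ y ∈ K, IsCompact (ordInterval K le x y))
    (hWopen : ∀ x ∈ K, ∀ y ∈ K, x ≠ y →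
      ({z ∈ ordInterval K le x y | z ≠ x ∧ z ≠ y}.Nonempty ∧
        ∃ V : Set (ℝ × ℝ), IsOpen V ∧ {z ∈ ordInterval K le x y | z ≠ x ∧ z ≠ y} = V ∩ K)) :
    (∀ x ∈ K, ∀ y ∈ K, 0 ≤ rhoK K le x y) ∧
    (∀ x ∈ K, rhoK K le x x = 0) ∧
    (∀ x ∈ K, ∀ y ∈ K, rhoK K le x y = 0 → x = y) ∧
    (∀ x ∈ K, ∀ y ∈ K, rhoK K le x y = rhoK K le y x) ∧
    (∀ x ∈ K, ∀ y ∈ K, ∀ z ∈ K, rhoK K le x z ≤ rhoK K le x y + rhoK K le y z) := by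
  have hmemL : ∀ x ∈ K, ∀ y ∈ K, x ∈ ordInterval K le x y := by
    intro x hx y hy
    rcases htotal x hx y hy with h | h
    · exact ⟨hx, Or.inl ⟨hrefl x hx, h⟩⟩
    · exact ⟨hx, Or.inr ⟨h, hrefl x hx⟩⟩
  have hsymm : ∀ x y, ordInterval K le x y = ordInterval K le y x := by
    intro x y
    ext z
    simp only [ordInterval, Set.mem_setOf_eq]
    tauto
  have hmemR : ∀ x ∈ K, ∀ y ∈ K, y ∈ ordInterval K le x y := by
    intro x hx y hy
    rw [hsymm]
    exact hmemL y hy x hx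
  refine ⟨?_, ?_, ?_, ?_, ?_⟩
  · intro x _ y _; exact Metric.diam_nonneg
  · intro x hx
    have : ordInterval K le x x = {x} := by
      ext z
      simp only [ordInterval, Set.mem_setOf_eq, Set.mem_singleton_iff]
      constructor
      · rintro ⟨hz, (⟨h1, h2⟩ | ⟨h1, h2⟩)⟩
        · exact (hantisymm x hx z hz h1 h2).symm
        · exact (hantisymm x hx z hz h1 h2).symm

      · intro h; rw [h]; exact ⟨hx, Or.inl ⟨hrefl x hx, hrefl x hx⟩⟩
    rw [rhoK, this, Metric.diam_singleton]
  · intro x hx y hy h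
    by_contra hne
    have hb := (hWcompact x hx y hy).isBounded
    have := Metric.dist_le_diam_of_mem hb (hmemL x hx y hy) (hmemR x hx y hy)
    rw [rhoK] at h
    rw [h] at this
    exact hne (dist_le_zero.mp this)
  · intro x _ y _; rw [rhoK, rhoK, hsymm]
  · intro x hx y hy z hz
    have hsub : ordInterval K le x z ⊆ ordInterval K le x y ∪ ordInterval K le y z := by
      rintro w ⟨hw, (⟨h1, h2⟩ | ⟨h1, h2⟩)⟩
      · rcases htotal w hw y hy with h | h
        · exact Or.inl ⟨hw, Or.inl ⟨h1, h⟩⟩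
        · exact Or.inr ⟨hw, Or.inl ⟨h, h2⟩⟩
      · rcases htotal w hw y hy with h | h
        · exact Or.inr ⟨hw, Or.inr ⟨h1, h⟩⟩
        · exact Or.inl ⟨hw, Or.inr ⟨h, h2⟩⟩
    have hb : Bornology.IsBounded (ordInterval K le x y ∪ ordInterval K le y z) :=
      ((hWcompact x hx y hy).isBounded).union ((hWcompact y hy z hz).isBounded)
    calc rhoK K le x z ≤ Metric.diam (ordInterval K le x y ∪ ordInterval K le y z) :=
          Metric.diam_mono hsub hb
      _ ≤ rhoK K le x y + dist y y + rhoK K le y z :=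
          Metric.diam_union (hmemR x hx y hy) (hmemL y hy z hz)
      _ = rhoK K le x y + rhoK K le y z := by rw [dist_self, add_zero]
end

section
/- On the compact set K ⊆ I² (the common boundary in the square decomposition), the topology induced by the metric ρ_K(x,y) = diam W(x,y) coincides with the subspace topology induced from the Euclidean metric on I². -/
/-- A chain lemma: consecutive monotonicity implies monotonicity. -/
lemma chainLe {α : Type*} (K : Set α) (le : α → α → Prop)
    (hrefl : ∀ x ∈ K, le x x)
    (htrans : ∀ x ∈ K, ∀ y ∈ K, ∀ z ∈ K, le x y → le y z → le x z)
    (u : ℕ → α) (hu : ∀ n, u n ∈ K) (hmono : ∀ n, le (u n) (u (n + 1))) :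
    ∀ m n, m ≤ n → le (u m) (u n) := by
  intro m n hmn
  induction n, hmn using Nat.le_induction with
  | base => exact hrefl _ (hu m)
  | succ n hmn ih => exact htrans _ (hu m) _ (hu n) _ (hu (n + 1)) ih (hmono n)

/-- Key lemma: if `z n ≤ w n ≤ z₀` with `z` increasing to its lub `z₀`, then `w` has a
subsequence converging to `z₀`. -/
lemma keyLem (K : Set (ℝ × ℝ)) (le : ℝ × ℝ → ℝ × ℝ → Prop)
    (hrefl : ∀ x ∈ K, le x x)
    (hantisymm : ∀ x ∈ K, ∀ y ∈ K, le x y → le y x → x = y)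
    (htrans : ∀ x ∈ K, ∀ y ∈ K, ∀ z ∈ K, le x y → le y z → le x z)
    (hmono_lub : ∀ u : ℕ → ℝ × ℝ, (∀ n, u n ∈ K) → (∀ n, le (u n) (u (n + 1))) →
      ∃ z ∈ K, Filter.Tendsto u Filter.atTop (nhds z) ∧
        (∀ n, le (u n) z) ∧ ∀ z' ∈ K, (∀ n, le (u n) z') → le z z')
    (hmono_glb : ∀ u : ℕ → ℝ × ℝ, (∀ n, u n ∈ K) → (∀ n, le (u (n + 1)) (u n)) →
      ∃ z ∈ K, Filter.Tendsto u Filter.atTop (nhds z) ∧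
        (∀ n, le z (u n)) ∧ ∀ z' ∈ K, (∀ n, le z' (u n)) → le z' z)
    (hsubseq : ∀ u : ℕ → ℝ × ℝ, (∀ n, u n ∈ K) → ∃ g : ℕ → ℕ, StrictMono g ∧
      ((∀ n, le (u (g n)) (u (g (n + 1)))) ∨ (∀ n, le (u (g (n + 1))) (u (g n)))))
    (z₀ : ℝ × ℝ) (hz₀ : z₀ ∈ K) (z w : ℕ → ℝ × ℝ)
    (hzK : ∀ n, z n ∈ K) (hwK : ∀ n, w n ∈ K)
    (hzinc : ∀ n, le (z n) (z (n + 1)))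
    (hzub : ∀ n, le (z n) z₀)
    (hzlub : ∀ z' ∈ K, (∀ n, le (z n) z') → le z₀ z')
    (hlow : ∀ n, le (z n) (w n)) (hup : ∀ n, le (w n) z₀) :
    ∃ h : ℕ → ℕ, StrictMono h ∧
      Filter.Tendsto (fun n => w (h n)) Filter.atTop (nhds z₀) := by
  have zchain : ∀ m n, m ≤ n → le (z m) (z n) :=
    chainLe K le hrefl htrans z hzK hzinc
  obtain ⟨h, hh, hcase⟩ := hsubseq w hwK
  rcases hcase with hinc | hdec
  · obtain ⟨q, hqK, hqt, hqub, hqlub⟩ :=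
      hmono_lub (fun n => w (h n)) (fun n => hwK _) hinc
    have hq1 : le q z₀ := hqlub z₀ hz₀ (fun n => hup _)
    have hq2 : le z₀ q := by
      refine hzlub q hqK (fun m => ?_)
      have h1 : le (z m) (z (h m)) := zchain m (h m) hh.le_apply
      have h2 : le (z (h m)) (w (h m)) := hlow (h m)
      have h3 : le (w (h m)) q := hqub m
      exact htrans _ (hzK m) _ (hwK (h m)) _ hqK
        (htrans _ (hzK m) _ (hzK (h m)) _ (hwK (h m)) h1 h2) h3
    have hq : q = z₀ := hantisymm _ hqK _ hz₀ hq1 hq2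
    exact ⟨h, hh, hq ▸ hqt⟩
  · obtain ⟨q, hqK, hqt, hqlb, hqglb⟩ :=
      hmono_glb (fun n => w (h n)) (fun n => hwK _) hdec
    have wchain : ∀ m n, m ≤ n → le (w (h n)) (w (h m)) :=
      chainLe K (fun a b => le b a) hrefl
        (fun x hx y hy zz hz hxy hyz => htrans zz hz y hy x hx hyz hxy)
        (fun n => w (h n)) (fun n => hwK _) hdec
    have hq1 : le q z₀ :=
      htrans _ hqK _ (hwK (h 0)) _ hz₀ (hqlb 0) (hup (h 0))
    have hq2 : le z₀ q := by
      refine hzlub q hqK (fun m => ?_)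
      have h1 : le (z m) (z (h m)) := zchain m (h m) hh.le_apply
      have h2 : le (z (h m)) q := by
        refine hqglb (z (h m)) (hzK _) (fun n => ?_)
        rcases le_total m n with hmn | hnm
        · have ha : le (z (h m)) (z (h n)) := zchain (h m) (h n) (hh.monotone hmn)
          exact htrans _ (hzK (h m)) _ (hzK (h n)) _ (hwK (h n)) ha (hlow (h n))
        · have hb : le (w (h m)) (w (h n)) := wchain n m hnm
          exact htrans _ (hzK (h m)) _ (hwK (h m)) _ (hwK (h n)) (hlow (h m)) hb
      exact htrans _ (hzK m) _ (hzK (h m)) _ hqK h1 h2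
    have hq : q = z₀ := hantisymm _ hqK _ hz₀ hq1 hq2
    exact ⟨h, hh, hq ▸ hqt⟩

/-- On the compact linearly ordered set `K ⊆ I²`, the topology induced by the metric
`ρ_K(x,y) = diam W(x,y)` coincides with the Euclidean subspace topology. -/
theorem rhoK_topology_eq_subspace (K : Set (ℝ × ℝ)) (hK : IsCompact K)
    (le : ℝ × ℝ → ℝ × ℝ → Prop)
    (hrefl : ∀ x ∈ K, le x x)
    (hantisymm : ∀ x ∈ K, ∀ y ∈ K, le x y → le y x → x = y)
    (htrans : ∀ x ∈ K, ∀ y ∈ K, ∀ z ∈ K, le x y → le y z → le x z)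
    (htotal : ∀ x ∈ K, ∀ y ∈ K, le x y ∨ le y x)
    (hmono_lub : ∀ u : ℕ → ℝ × ℝ, (∀ n, u n ∈ K) → (∀ n, le (u n) (u (n + 1))) →
      ∃ z ∈ K, Filter.Tendsto u Filter.atTop (nhds z) ∧
        (∀ n, le (u n) z) ∧ ∀ z' ∈ K, (∀ n, le (u n) z') → le z z')
    (hmono_glb : ∀ u : ℕ → ℝ × ℝ, (∀ n, u n ∈ K) → (∀ n, le (u (n + 1)) (u n)) →
      ∃ z ∈ K, Filter.Tendsto u Filter.atTop (nhds z) ∧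
        (∀ n, le z (u n)) ∧ ∀ z' ∈ K, (∀ n, le z' (u n)) → le z' z)
    (hsubseq : ∀ u : ℕ → ℝ × ℝ, (∀ n, u n ∈ K) → ∃ g : ℕ → ℕ, StrictMono g ∧
      ((∀ n, le (u (g n)) (u (g (n + 1)))) ∨ (∀ n, le (u (g (n + 1))) (u (g n))))) :
    ∀ z₀ ∈ K, ∀ ε > (0 : ℝ),
      (∃ δ > (0 : ℝ), ∀ z ∈ K, rhoK K le z z₀ < δ → dist z z₀ < ε) ∧
      (∃ δ > (0 : ℝ), ∀ z ∈ K, dist z z₀ < δ → rhoK K le z z₀ < ε) := by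
  intro z₀ hz₀ ε hε
  constructor
  · -- easy direction: dist z z₀ ≤ diam W(z,z₀)
    refine ⟨ε, hε, fun z hz hρ => ?_⟩
    have hzmem : z ∈ ordInterval K le z z₀ := by
      refine ⟨hz, ?_⟩
      rcases htotal z hz z₀ hz₀ with h | h
      · exact Or.inl ⟨hrefl z hz, h⟩
      · exact Or.inr ⟨h, hrefl z hz⟩
    have hz₀mem : z₀ ∈ ordInterval K le z z₀ := by
      refine ⟨hz₀, ?_⟩
      rcases htotal z hz z₀ hz₀ with h | h
      · exact Or.inl ⟨h, hrefl z₀ hz₀⟩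
      · exact Or.inr ⟨hrefl z₀ hz₀, h⟩
    have hbd : Bornology.IsBounded (ordInterval K le z z₀) :=
      hK.isBounded.subset (Set.sep_subset _ _)
    calc dist z z₀ ≤ Metric.diam (ordInterval K le z z₀) :=
          Metric.dist_le_diam_of_mem hbd hzmem hz₀mem
      _ < ε := hρ
  · by_contra hcon
    push_neg at hcon
    have hz' : ∀ n : ℕ, ∃ zz ∈ K, dist zz z₀ < 1 / (n + 1) ∧ ε ≤ rhoK K le zz z₀ :=
      fun n => hcon (1 / (n + 1)) (by positivity)
    choose z hzK hzd hzρ using hz'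
    have hw : ∀ n, ∃ ww ∈ ordInterval K le (z n) z₀, ε / 4 ≤ dist ww z₀ := by
      intro n
      by_contra hcc
      push_neg at hcc
      have hdiam : Metric.diam (ordInterval K le (z n) z₀) ≤ ε / 2 := by
        apply Metric.diam_le_of_forall_dist_le (by linarith)
        intro a ha b hb
        calc dist a b ≤ dist a z₀ + dist z₀ b := dist_triangle a z₀ b
          _ ≤ ε / 4 + ε / 4 := add_le_add (hcc a ha).le
              (by rw [dist_comm]; exact (hcc b hb).le)
          _ = ε / 2 := by ring
      have h2 := hzρ n
      simp only [rhoK] at h2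
      linarith
    choose w hwmem hwd using hw
    have hwK : ∀ n, w n ∈ K := fun n => (hwmem n).1
    have hwor : ∀ n, (le (z n) (w n) ∧ le (w n) z₀) ∨ (le z₀ (w n) ∧ le (w n) (z n)) :=
      fun n => (hwmem n).2
    have hztend : Filter.Tendsto z Filter.atTop (nhds z₀) := by
      rw [tendsto_iff_dist_tendsto_zero]
      exact squeeze_zero (fun n => dist_nonneg) (fun n => (hzd n).le)
        tendsto_one_div_add_atTop_nhds_zero_nat
    obtain ⟨g, hg, hgcase⟩ := hsubseq z hzK
    have final : ∃ h : ℕ → ℕ, StrictMono h ∧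
        Filter.Tendsto (fun n => w (g (h n))) Filter.atTop (nhds z₀) := by
      rcases hgcase with hinc | hdec
      · obtain ⟨p, hpK, hpt, hpub, hplub⟩ :=
          hmono_lub (fun n => z (g n)) (fun n => hzK _) hinc
        have hp : p = z₀ := tendsto_nhds_unique hpt (hztend.comp hg.tendsto_atTop)
        subst hp
        refine keyLem K le hrefl hantisymm htrans hmono_lub hmono_glb hsubseq p hpK
          (fun n => z (g n)) (fun n => w (g n)) (fun n => hzK _) (fun n => hwK _)
          hinc hpub hplub ?_ ?_
        · intro n
          rcases hwor (g n) with ⟨h1, _⟩ | ⟨h1, _⟩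
          · exact h1
          · exact htrans _ (hzK _) _ hpK _ (hwK _) (hpub n) h1
        · intro n
          rcases hwor (g n) with ⟨_, h2⟩ | ⟨_, h2⟩
          · exact h2
          · exact htrans _ (hwK _) _ (hzK _) _ hpK h2 (hpub n)
      · obtain ⟨p, hpK, hpt, hplb, hpglb⟩ :=
          hmono_glb (fun n => z (g n)) (fun n => hzK _) hdec
        have hp : p = z₀ := tendsto_nhds_unique hpt (hztend.comp hg.tendsto_atTop)
        subst hp
        refine keyLem K (fun a b => le b a) hrefl
          (fun x hx y hy h1 h2 => hantisymm x hx y hy h2 h1)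
          (fun x hx y hy zz hz hxy hyz => htrans zz hz y hy x hx hyz hxy)
          hmono_glb hmono_lub
          (fun u hu => (hsubseq u hu).imp (fun gg hgg => ⟨hgg.1, hgg.2.symm⟩))
          p hpK (fun n => z (g n)) (fun n => w (g n)) (fun n => hzK _) (fun n => hwK _)
          hdec hplb hpglb ?_ ?_
        · intro n
          rcases hwor (g n) with ⟨_, h2⟩ | ⟨_, h2⟩
          · exact htrans _ (hwK _) _ hpK _ (hzK _) h2 (hplb n)
          · exact h2
        · intro n
          rcases hwor (g n) with ⟨h1, _⟩ | ⟨h1, _⟩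
          · exact htrans _ hpK _ (hzK _) _ (hwK _) (hplb n) h1
          · exact h1
    obtain ⟨h, hh, htend⟩ := final
    have hd0 : Filter.Tendsto (fun n => dist (w (g (h n))) z₀) Filter.atTop (nhds 0) :=
      tendsto_iff_dist_tendsto_zero.mp htend
    have hge : ε / 4 ≤ 0 := ge_of_tendsto' hd0 (fun n => hwd (g (h n)))
    linarith
end

section
/- Fix z₁ ≤ z₂ in K, z₁ ≠ z₂, and define f_{z₁,z₂} : K → ℝ by f_{z₁,z₂}(z) = f_{z₁}(z) + f_{z₂}(z), where f_w(z) = ρ_K(z,w) if z ≥ w and f_w(z) = −ρ_K(z,w) if z ≤ w. Then f_{z₁,z₂} is continuous and nondecreasing, and satisfies the intermediate value property: if f_{z₁,z₂}(z') = t', f_{z₁,z₂}(z'') = t'' with z' ≤ z'', then for every t ∈ [t', t''] there exists z ∈ W(z', z'') with f_{z₁,z₂}(z) = t. -/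
open Classical in
/-- The signed distance `f_w(z)`: `ρ_K(z,w)` if `z ≥ w` and `-ρ_K(z,w)` if `z ≤ w`. -/
noncomputable def signedDistK (K : Set (ℝ × ℝ)) (le : ℝ × ℝ → ℝ × ℝ → Prop)
    (w z : ℝ × ℝ) : ℝ :=
  if le w z then rhoK K le z w else -(rhoK K le z w)

/-- The function `f_{z₁,z₂} = f_{z₁} + f_{z₂}` on `K` is continuous, nondecreasing, and
satisfies the intermediate value property on order intervals. -/
theorem signedDist_sum_continuous_monotone_IVP (K : Set (ℝ × ℝ)) (hK : IsCompact K)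
    (le : ℝ × ℝ → ℝ × ℝ → Prop) (a b : ℝ × ℝ) (ha : a ∈ K) (hb : b ∈ K)
    (hrefl : ∀ x ∈ K, le x x)
    (hantisymm : ∀ x ∈ K, ∀ y ∈ K, le x y → le y x → x = y)
    (htrans : ∀ x ∈ K, ∀ y ∈ K, ∀ z ∈ K, le x y → le y z → le x z)
    (htotal : ∀ x ∈ K, ∀ y ∈ K, le x y ∨ le y x)
    (hmin : ∀ x ∈ K, le a x) (hmax : ∀ x ∈ K, le x b)
    (hWcompact : ∀ x ∈ K, ∀ y ∈ K, IsCompact (ordInterval K le x y))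
    (hWnonempty : ∀ x ∈ K, ∀ y ∈ K, x ≠ y →
      {z ∈ ordInterval K le x y | z ≠ x ∧ z ≠ y}.Nonempty)
    (htop : ∀ z₀ ∈ K, ∀ ε > (0 : ℝ),
      (∃ δ > (0 : ℝ), ∀ z ∈ K, rhoK K le z z₀ < δ → dist z z₀ < ε) ∧
      (∃ δ > (0 : ℝ), ∀ z ∈ K, dist z z₀ < δ → rhoK K le z z₀ < ε))
    (z₁ z₂ : ℝ × ℝ) (hz₁ : z₁ ∈ K) (hz₂ : z₂ ∈ K) (h12 : le z₁ z₂) (hne : z₁ ≠ z₂) :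
    ContinuousOn (fun z => signedDistK K le z₁ z + signedDistK K le z₂ z) K ∧
    (∀ z ∈ K, ∀ z' ∈ K, le z z' →
      signedDistK K le z₁ z + signedDistK K le z₂ z ≤
        signedDistK K le z₁ z' + signedDistK K le z₂ z') ∧
    (∀ z' ∈ K, ∀ z'' ∈ K, le z' z'' → ∀ t : ℝ,
      signedDistK K le z₁ z' + signedDistK K le z₂ z' ≤ t →
      t ≤ signedDistK K le z₁ z'' + signedDistK K le z₂ z'' →
      ∃ z ∈ K, le z' z ∧ le z z'' ∧
        signedDistK K le z₁ z + signedDistK K le z₂ z = t) := by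
    classical
  -- basic facts
  have hWsub : ∀ x y, ordInterval K le x y ⊆ K := fun x y z hz => hz.1
  have hbdd : Bornology.IsBounded K := hK.isBounded
  have hWbdd : ∀ x y, Bornology.IsBounded (ordInterval K le x y) :=
    fun x y => hbdd.subset (hWsub x y)
  have hrho_nonneg : ∀ x y, 0 ≤ rhoK K le x y := fun x y => Metric.diam_nonneg
  have hWcomm : ∀ x y, ordInterval K le x y = ordInterval K le y x := by
    intro x y; ext z
    simp only [ordInterval, Set.mem_setOf_eq]
    tauto
  have hrho_comm : ∀ x y, rhoK K le x y = rhoK K le y x := by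
    intro x y; unfold rhoK; rw [hWcomm]
  have hself : ∀ x ∈ K, ∀ y ∈ K, x ∈ ordInterval K le x y := by
    intro x hx y hy
    rcases htotal x hx y hy with h | h
    · exact ⟨hx, Or.inl ⟨hrefl x hx, h⟩⟩
    · exact ⟨hx, Or.inr ⟨h, hrefl x hx⟩⟩
  have hself' : ∀ x ∈ K, ∀ y ∈ K, y ∈ ordInterval K le x y := by
    intro x hx y hy; rw [hWcomm]; exact hself y hy x hx
  have hmem : ∀ u ∈ K, ∀ v ∈ K, ∀ w ∈ K, le u v → le v w → v ∈ ordInterval K le u w :=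
    fun u hu v hv w hw h1 h2 => ⟨hv, Or.inl ⟨h1, h2⟩⟩
  have hbetween : ∀ x ∈ K, ∀ y ∈ K, le x y → ∀ u ∈ ordInterval K le x y,
      le x u ∧ le u y := by
    intro x hx y hy hxy u hu
    obtain ⟨huK, h | h⟩ := hu
    · exact h
    · exact ⟨htrans x hx y hy u huK hxy h.1, htrans u huK x hx y hy h.2 hxy⟩
  -- subset lemmas
  have hsubL : ∀ u ∈ K, ∀ v ∈ K, ∀ w ∈ K, le u v → le v w →
      ordInterval K le u v ⊆ ordInterval K le u w := by
    intro u hu v hv w hw huv hvw z hz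
    obtain ⟨hzK, h | h⟩ := hz
    · exact ⟨hzK, Or.inl ⟨h.1, htrans z hzK v hv w hw h.2 hvw⟩⟩
    · exact ⟨hzK, Or.inl ⟨htrans u hu v hv z hzK huv h.1,
        htrans z hzK u hu w hw h.2 (htrans u hu v hv w hw huv hvw)⟩⟩
  have hsubR : ∀ u ∈ K, ∀ v ∈ K, ∀ w ∈ K, le u v → le v w →
      ordInterval K le v w ⊆ ordInterval K le u w := by
    intro u hu v hv w hw huv hvw z hz
    obtain ⟨hzK, h | h⟩ := hz
    · exact ⟨hzK, Or.inl ⟨htrans u hu v hv z hzK huv h.1, h.2⟩⟩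
    · exact ⟨hzK, Or.inl ⟨htrans u hu v hv z hzK huv (htrans v hv w hw z hzK hvw h.1),
        htrans z hzK v hv w hw h.2 hvw⟩⟩
  have hsplit : ∀ u ∈ K, ∀ v ∈ K, ∀ w ∈ K, le u v → le v w →
      ordInterval K le u w ⊆ ordInterval K le u v ∪ ordInterval K le v w := by
    intro u hu v hv w hw huv hvw z hz
    obtain ⟨hzK, h | h⟩ := hz
    · rcases htotal z hzK v hv with hzv | hvz
      · exact Or.inl ⟨hzK, Or.inl ⟨h.1, hzv⟩⟩
      · exact Or.inr ⟨hzK, Or.inl ⟨hvz, h.2⟩⟩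
    · exact Or.inl ⟨hzK, Or.inl ⟨htrans u hu w hw z hzK (htrans u hu v hv w hw huv hvw) h.1,
        htrans z hzK u hu v hv h.2 huv⟩⟩
  -- rho monotone / triangle
  have hrho_monoL : ∀ u ∈ K, ∀ v ∈ K, ∀ w ∈ K, le u v → le v w →
      rhoK K le u v ≤ rhoK K le u w := by
    intro u hu v hv w hw h1 h2
    exact Metric.diam_mono (hsubL u hu v hv w hw h1 h2) (hWbdd u w)
  have hrho_monoR : ∀ u ∈ K, ∀ v ∈ K, ∀ w ∈ K, le u v → le v w →
      rhoK K le v w ≤ rhoK K le u w := by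
    intro u hu v hv w hw h1 h2
    exact Metric.diam_mono (hsubR u hu v hv w hw h1 h2) (hWbdd u w)
  have hrho_tri : ∀ u ∈ K, ∀ v ∈ K, ∀ w ∈ K, le u v → le v w →
      rhoK K le u w ≤ rhoK K le u v + rhoK K le v w := by
    intro u hu v hv w hw h1 h2
    calc rhoK K le u w
        ≤ Metric.diam (ordInterval K le u v ∪ ordInterval K le v w) :=
          Metric.diam_mono (hsplit u hu v hv w hw h1 h2) ((hWbdd u v).union (hWbdd v w))
      _ ≤ rhoK K le u v + rhoK K le v w :=
          Metric.diam_union' ⟨v, hself' u hu v hv, hself v hv w hw⟩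
  -- monotonicity of a single signed distance
  have hmono1 : ∀ w ∈ K, ∀ z ∈ K, ∀ z' ∈ K, le z z' →
      signedDistK K le w z ≤ signedDistK K le w z' := by
    intro w hw z hz z' hz' hzz'
    unfold signedDistK
    split_ifs with h1 h2 h2
    · rw [hrho_comm z w, hrho_comm z' w]
      exact hrho_monoL w hw z hz z' hz' h1 hzz'
    · exact absurd (htrans w hw z hz z' hz' h1 hzz') h2
    · have := hrho_nonneg z w; have := hrho_nonneg z' w; linarith
    · have hz'w : le z' w := (htotal z' hz' w hw).resolve_right h2
      have : rhoK K le z' w ≤ rhoK K le z w :=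
        Metric.diam_mono (hsubR z hz z' hz' w hw hzz' hz'w) (hWbdd z w)
      linarith
  -- Lipschitz-type bound (one direction)
  have hlip1 : ∀ w ∈ K, ∀ z₀ ∈ K, ∀ z ∈ K, le z₀ z →
      signedDistK K le w z - signedDistK K le w z₀ ≤ 2 * rhoK K le z₀ z := by
    intro w hw z₀ h0 z hz h0z
    have hnn := hrho_nonneg z₀ z
    unfold signedDistK
    split_ifs with h1 h2 h2
    · -- w ≤ z₀? no: h1 : le w z, h2 : le w z₀; so w ≤ z₀ ≤ z
      have htr := hrho_tri w hw z₀ h0 z hz h2 h0z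
      rw [hrho_comm z w, hrho_comm z₀ w]
      linarith
    · -- le w z, ¬ le w z₀ : z₀ ≤ w ≤ z
      have hz₀w : le z₀ w := (htotal z₀ h0 w hw).resolve_right h2
      have e1 : rhoK K le w z ≤ rhoK K le z₀ z :=
        hrho_monoR z₀ h0 w hw z hz hz₀w h1
      have e2 : rhoK K le z₀ w ≤ rhoK K le z₀ z :=
        hrho_monoL z₀ h0 w hw z hz hz₀w h1
      rw [hrho_comm z w, hrho_comm z₀ w]
      rw [hrho_comm z₀ w] at e2
      linarith
    · exact absurd (htrans w hw z₀ h0 z hz h2 h0z) h1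
    · -- z₀ ≤ z ≤ w
      have hzw : le z w := (htotal z hz w hw).resolve_right h1
      have htr := hrho_tri z₀ h0 z hz w hw h0z hzw
      rw [hrho_comm z w, hrho_comm z₀ w]
      rw [hrho_comm z₀ w, hrho_comm z w] at htr
      linarith
  have hlip : ∀ w ∈ K, ∀ z ∈ K, ∀ z₀ ∈ K,
      |signedDistK K le w z - signedDistK K le w z₀| ≤ 2 * rhoK K le z z₀ := by
    intro w hw z hz z₀ h0
    have hnn := hrho_nonneg z z₀
    rw [abs_sub_le_iff]
    rcases htotal z hz z₀ h0 with h | h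
    · constructor
      · have := hmono1 w hw z hz z₀ h0 h; linarith
      · have := hlip1 w hw z hz z₀ h0 h
        linarith
    · constructor
      · have := hlip1 w hw z₀ h0 z hz h
        rw [hrho_comm z₀ z] at this; linarith
      · have := hmono1 w hw z₀ h0 z hz h; linarith
  -- continuity
  have hcont : ContinuousOn (fun z => signedDistK K le z₁ z + signedDistK K le z₂ z) K := by
    rw [Metric.continuousOn_iff]
    intro z₀ h0 ε hε
    obtain ⟨δ, hδpos, hδ⟩ := (htop z₀ h0 (ε / 5) (by positivity)).2
    refine ⟨δ, hδpos, fun z hzK hdist => ?_⟩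
    have hρ := hδ z hzK hdist
    have l1 := hlip z₁ hz₁ z hzK z₀ h0
    have l2 := hlip z₂ hz₂ z hzK z₀ h0
    rw [Real.dist_eq]
    have key : signedDistK K le z₁ z + signedDistK K le z₂ z -
        (signedDistK K le z₁ z₀ + signedDistK K le z₂ z₀) =
        (signedDistK K le z₁ z - signedDistK K le z₁ z₀) +
        (signedDistK K le z₂ z - signedDistK K le z₂ z₀) := by ring
    rw [key]
    calc |(signedDistK K le z₁ z - signedDistK K le z₁ z₀) +
          (signedDistK K le z₂ z - signedDistK K le z₂ z₀)|
        ≤ |signedDistK K le z₁ z - signedDistK K le z₁ z₀| +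
          |signedDistK K le z₂ z - signedDistK K le z₂ z₀| := abs_add_le _ _
      _ < ε := by linarith
  -- monotonicity of the sum
  have hmono : ∀ z ∈ K, ∀ z' ∈ K, le z z' →
      signedDistK K le z₁ z + signedDistK K le z₂ z ≤
        signedDistK K le z₁ z' + signedDistK K le z₂ z' := by
    intro z hz z' hz' h
    have := hmono1 z₁ hz₁ z hz z' hz' h
    have := hmono1 z₂ hz₂ z hz z' hz' h
    linarith
  -- existence of maximal / minimal elements of nonempty compact closed subsets
  have hmaxex : ∀ S : Set (ℝ × ℝ), S.Nonempty → IsCompact S → IsClosed S → S ⊆ K →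
      ∃ m ∈ S, ∀ s ∈ S, le s m := by
    intro S hne hSc hScl hSK
    have hnty : Nonempty S := hne.to_subtype
    set F : S → Set (ℝ × ℝ) := fun s => {z ∈ S | le s z} with hF
    have hFeq : ∀ s : S, F s = S ∩ ordInterval K le s b := by
      intro s; ext z; constructor
      · rintro ⟨hzS, hsz⟩
        exact ⟨hzS, hSK hzS, Or.inl ⟨hsz, hmax z (hSK hzS)⟩⟩
      · rintro ⟨hzS, -, h | h⟩
        · exact ⟨hzS, h.1⟩
        · have hzb : z = b := hantisymm z (hSK hzS) b hb (hmax z (hSK hzS)) h.1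
          have hbs : le b (s : ℝ × ℝ) := hzb ▸ h.2
          have hsb : (s : ℝ × ℝ) = b :=
            hantisymm s (hSK s.2) b hb (hmax s (hSK s.2)) hbs
          refine ⟨hzS, ?_⟩
          rw [hzb, hsb]; exact hrefl b hb
    have hFcl : ∀ s : S, IsClosed (F s) := by
      intro s; rw [hFeq s]
      exact hScl.inter (hWcompact s (hSK s.2) b hb).isClosed
    have hFc : ∀ s : S, IsCompact (F s) := by
      intro s; rw [hFeq s]
      exact hSc.inter_right (hWcompact s (hSK s.2) b hb).isClosed
    have hFne : ∀ s : S, (F s).Nonempty := fun s => ⟨s, s.2, hrefl s (hSK s.2)⟩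
    have hFdir : Directed (· ⊇ ·) F := by
      intro s₁ s₂
      rcases htotal s₁ (hSK s₁.2) s₂ (hSK s₂.2) with h | h
      · exact ⟨s₂, fun z hz => ⟨hz.1, htrans s₁ (hSK s₁.2) s₂ (hSK s₂.2) z (hSK hz.1) h hz.2⟩,
          le_refl _⟩
      · exact ⟨s₁, le_refl _,
          fun z hz => ⟨hz.1, htrans s₂ (hSK s₂.2) s₁ (hSK s₁.2) z (hSK hz.1) h hz.2⟩⟩
    obtain ⟨m, hm⟩ :=
      IsCompact.nonempty_iInter_of_directed_nonempty_isCompact_isClosed F hFdir hFne hFc hFcl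
    simp only [Set.mem_iInter] at hm
    obtain ⟨s₀⟩ := hnty
    exact ⟨m, (hm s₀).1, fun s hs => (hm ⟨s, hs⟩).2⟩
  have hminex : ∀ S : Set (ℝ × ℝ), S.Nonempty → IsCompact S → IsClosed S → S ⊆ K →
      ∃ m ∈ S, ∀ s ∈ S, le m s := by
    intro S hne hSc hScl hSK
    have hnty : Nonempty S := hne.to_subtype
    set F : S → Set (ℝ × ℝ) := fun s => {z ∈ S | le z s} with hF
    have hFeq : ∀ s : S, F s = S ∩ ordInterval K le a s := by
      intro s; ext z; constructor
      · rintro ⟨hzS, hzs⟩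
        exact ⟨hzS, hSK hzS, Or.inl ⟨hmin z (hSK hzS), hzs⟩⟩
      · rintro ⟨hzS, -, h | h⟩
        · exact ⟨hzS, h.2⟩
        · have hza : z = a := hantisymm z (hSK hzS) a ha h.2 (hmin z (hSK hzS))
          have hsa : le (s : ℝ × ℝ) a := hza ▸ h.1
          have hsa' : (s : ℝ × ℝ) = a :=
            hantisymm s (hSK s.2) a ha hsa (hmin s (hSK s.2))
          refine ⟨hzS, ?_⟩
          rw [hza, hsa']; exact hrefl a ha
    have hFcl : ∀ s : S, IsClosed (F s) := by
      intro s; rw [hFeq s]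
      exact hScl.inter (hWcompact a ha s (hSK s.2)).isClosed
    have hFc : ∀ s : S, IsCompact (F s) := by
      intro s; rw [hFeq s]
      exact hSc.inter_right (hWcompact a ha s (hSK s.2)).isClosed
    have hFne : ∀ s : S, (F s).Nonempty := fun s => ⟨s, s.2, hrefl s (hSK s.2)⟩
    have hFdir : Directed (· ⊇ ·) F := by
      intro s₁ s₂
      rcases htotal s₁ (hSK s₁.2) s₂ (hSK s₂.2) with h | h
      · exact ⟨s₁, le_refl _,
          fun z hz => ⟨hz.1, htrans z (hSK hz.1) s₁ (hSK s₁.2) s₂ (hSK s₂.2) hz.2 h⟩⟩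
      · exact ⟨s₂, fun z hz => ⟨hz.1, htrans z (hSK hz.1) s₂ (hSK s₂.2) s₁ (hSK s₁.2) hz.2 h⟩,
          le_refl _⟩
    obtain ⟨m, hm⟩ :=
      IsCompact.nonempty_iInter_of_directed_nonempty_isCompact_isClosed F hFdir hFne hFc hFcl
    simp only [Set.mem_iInter] at hm
    obtain ⟨s₀⟩ := hnty
    exact ⟨m, (hm s₀).1, fun s hs => (hm ⟨s, hs⟩).2⟩
  refine ⟨hcont, hmono, ?_⟩
  -- the intermediate value property
  intro z' hz' z'' hz'' hle t ht' ht''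
  set f : ℝ × ℝ → ℝ := fun z => signedDistK K le z₁ z + signedDistK K le z₂ z with hf
  have hWc := hWcompact z' hz' z'' hz''
  have hWcl := hWc.isClosed
  have hcontW : ContinuousOn f (ordInterval K le z' z'') := hcont.mono (hWsub z' z'')
  set S : Set (ℝ × ℝ) := ordInterval K le z' z'' ∩ f ⁻¹' Set.Iic t with hS
  set T : Set (ℝ × ℝ) := ordInterval K le z' z'' ∩ f ⁻¹' Set.Ici t with hT
  have hScl : IsClosed S := hcontW.preimage_isClosed_of_isClosed hWcl isClosed_Iic
  have hTcl : IsClosed T := hcontW.preimage_isClosed_of_isClosed hWcl isClosed_Ici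
  have hSc : IsCompact S := hWc.of_isClosed_subset hScl Set.inter_subset_left
  have hTc : IsCompact T := hWc.of_isClosed_subset hTcl Set.inter_subset_left
  have hSne : S.Nonempty := ⟨z', hself z' hz' z'' hz'', ht'⟩
  have hTne : T.Nonempty := ⟨z'', hself' z' hz' z'' hz'', ht''⟩
  have hSK : S ⊆ K := fun z hz => hWsub z' z'' hz.1
  have hTK : T ⊆ K := fun z hz => hWsub z' z'' hz.1
  obtain ⟨m, hmS, hmmax⟩ := hmaxex S hSne hSc hScl hSK
  have hmK : m ∈ K := hSK hmS
  have hmbet := hbetween z' hz' z'' hz'' hle m hmS.1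
  have hfm : f m ≤ t := hmS.2
  rcases eq_or_lt_of_le hfm with heq | hlt
  · exact ⟨m, hmK, hmbet.1, hmbet.2, heq⟩
  obtain ⟨m', hm'T, hm'min⟩ := hminex T hTne hTc hTcl hTK
  have hm'K : m' ∈ K := hTK hm'T
  have hm'bet := hbetween z' hz' z'' hz'' hle m' hm'T.1
  have hm't : t ≤ f m' := hm'T.2
  -- m < m'
  have hmm' : le m m' := by
    rcases htotal m hmK m' hm'K with h | h
    · exact h
    · have h2 : f m' ≤ f m := hmono m' hm'K m hmK h
      exfalso; linarith
  have hmne : m ≠ m' := by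
    intro h; rw [h] at hlt; exact absurd hm't (not_le.mpr hlt)
  obtain ⟨z, hzW, hzm, hzm'⟩ := hWnonempty m hmK m' hm'K hmne
  have hzK : z ∈ K := hWsub m m' hzW
  have hzbet := hbetween m hmK m' hm'K hmm' z hzW
  have hz'z : le z' z := htrans z' hz' m hmK z hzK hmbet.1 hzbet.1
  have hzz'' : le z z'' := htrans z hzK m' hm'K z'' hz'' hzbet.2 hm'bet.2
  have hzWmem : z ∈ ordInterval K le z' z'' := hmem z' hz' z hzK z'' hz'' hz'z hzz''
  rcases le_total (f z) t with hzt | htz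
  · have hle' := hmmax z ⟨hzWmem, hzt⟩
    exact absurd (hantisymm m hmK z hzK hzbet.1 hle').symm hzm
  · have hle' := hm'min z ⟨hzWmem, htz⟩
    exact absurd (hantisymm z hzK m' hm'K hzbet.2 hle') hzm'
end

section
/- Let K be a compact metrizable space equipped with a linear order with minimum a and maximum b such that: (i) the order topology agrees with the metric topology; (ii) closed order intervals are compact; (iii) for x < y the open order interval (x,y) is nonempty; (iv) monotone sequences converge to their suprema/infima. Then K is homeomorphic to the closed interval [0,1] via an order isomorphism. -/
open Filter in
/-- A compact metrizable linearly ordered space with endpoints, whose order topology agrees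
with the metric topology, with compact closed intervals, dense order, and monotone sequences
converging to their suprema/infima, is homeomorphic to `[0,1]` via an order isomorphism. -/
theorem homeomorph_unitInterval_of_linear_continuum (K : Type*) [MetricSpace K]
    [CompactSpace K] [LinearOrder K] [OrderTopology K]
    (a b : K) (hab : a ≠ b) (hmin : ∀ x, a ≤ x) (hmax : ∀ x, x ≤ b)
    (hIccCompact : ∀ x y : K, IsCompact (Set.Icc x y))
    (hdense : ∀ x y : K, x < y → ∃ z, x < z ∧ z < y)
    (hlub : ∀ u : ℕ → K, Monotone u →
      ∃ z, IsLUB (Set.range u) z ∧ Tendsto u atTop (nhds z))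
    (hglb : ∀ u : ℕ → K, Antitone u →
      ∃ z, IsGLB (Set.range u) z ∧ Tendsto u atTop (nhds z)) :
    ∃ e : K ≃ₜ (Set.Icc (0 : ℝ) 1), ∀ x y : K, x ≤ y ↔ e x ≤ e y := by
  have hab' : a < b := (hmin b).lt_of_ne hab
  obtain ⟨D₀, hD₀c, hD₀d⟩ := TopologicalSpace.exists_countable_dense K
  set D : Set K := D₀ ∩ Set.Ioo a b with hDdef
  -- between any two points of K there is a point of D
  have hbtw : ∀ x y : K, x < y → ∃ d ∈ D, x < d ∧ d < y := by
    intro x y hxy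
    obtain ⟨m, hm1, hm2⟩ := hdense x y hxy
    obtain ⟨d, hd₀, hd⟩ := hD₀d.exists_mem_open isOpen_Ioo ⟨m, hm1, hm2⟩
    exact ⟨d, ⟨hd₀, lt_of_le_of_lt (hmin x) hd.1, lt_of_lt_of_le hd.2 (hmax y)⟩, hd.1, hd.2⟩
  haveI : Countable D := (hD₀c.mono Set.inter_subset_left).to_subtype
  haveI : Nonempty D := by
    obtain ⟨d, hd, -, -⟩ := hbtw a b hab'
    exact ⟨⟨d, hd⟩⟩
  haveI : DenselyOrdered D := ⟨fun x y h => by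
    obtain ⟨d, hd, h1, h2⟩ := hbtw x y h
    exact ⟨⟨d, hd⟩, Subtype.mk_lt_mk.mpr h1, Subtype.mk_lt_mk.mpr h2⟩⟩
  haveI : NoMinOrder D := ⟨fun x => by
    obtain ⟨d, hd, -, h2⟩ := hbtw a x x.2.2.1
    exact ⟨⟨d, hd⟩, Subtype.mk_lt_mk.mpr h2⟩⟩
  haveI : NoMaxOrder D := ⟨fun x => by
    obtain ⟨d, hd, h1, -⟩ := hbtw x b x.2.2.2
    exact ⟨⟨d, hd⟩, Subtype.mk_lt_mk.mpr h1⟩⟩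
  haveI : Nonempty ↥(Set.Ioo (0:ℚ) 1) := ⟨⟨1/2, by norm_num⟩⟩
  obtain ⟨φ⟩ := Order.iso_of_countable_dense (α := ↥D) (β := ↥(Set.Ioo (0:ℚ) 1))
  -- the "rational scale" function
  set f : ↥D → ℝ := fun d => ((φ d : ℚ) : ℝ) with hfdef
  have hf0 : ∀ d, 0 < f d := fun d =>
    show (0:ℝ) < ((φ d : ℚ) : ℝ) by exact_mod_cast (φ d).2.1
  have hf1 : ∀ d, f d < 1 := fun d =>
    show ((φ d : ℚ) : ℝ) < 1 by exact_mod_cast (φ d).2.2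
  have hfmono : StrictMono f := fun d e h =>
    show ((φ d : ℚ) : ℝ) < ((φ e : ℚ) : ℝ) by
      exact_mod_cast Subtype.coe_lt_coe.mpr (φ.lt_iff_lt.mpr h)
  -- the Dedekind extension
  set g : K → ℝ := fun x => sSup (f '' {d : ↥D | (d : K) ≤ x}) with hgdef
  have hbdd : ∀ x : K, BddAbove (f '' {d : ↥D | (d : K) ≤ x}) :=
    fun x => ⟨1, fun z ⟨e, _, hez⟩ => hez ▸ (hf1 e).le⟩
  have hg0 : ∀ x, 0 ≤ g x := fun x =>
    Real.sSup_nonneg (fun z ⟨e, _, hez⟩ => hez ▸ (hf0 e).le)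
  have hg1 : ∀ x, g x ≤ 1 := fun x =>
    Real.sSup_le (fun z ⟨e, _, hez⟩ => hez ▸ (hf1 e).le) zero_le_one
  have hgle : ∀ (d : ↥D) (x : K), (d : K) ≤ x → f d ≤ g x := fun d x h =>
    le_csSup (hbdd x) ⟨d, h, rfl⟩
  have hgmono : StrictMono g := by
    intro x y hxy
    obtain ⟨d, hd, hxd, hdy⟩ := hbtw x y hxy
    obtain ⟨d', hd', hdd', hd'y⟩ := hbtw d y hdy
    have h1 : g x ≤ f ⟨d, hd⟩ := by
      refine Real.sSup_le (fun z ⟨e, he, hez⟩ => hez ▸ ?_) (hf0 _).le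
      exact (hfmono (Subtype.mk_lt_mk.mpr (lt_of_le_of_lt he hxd) : e < ⟨d, hd⟩)).le
    have h2 : f (⟨d, hd⟩ : ↥D) < f ⟨d', hd'⟩ := hfmono (Subtype.mk_lt_mk.mpr hdd')
    exact lt_of_le_of_lt h1 (lt_of_lt_of_le h2 (hgle ⟨d', hd'⟩ y hd'y.le))
  -- surjectivity onto [0,1]
  have hsurj : ∀ t : ℝ, 0 ≤ t → t ≤ 1 → ∃ x : K, g x = t := by
    intro t ht0 ht1
    rcases eq_or_lt_of_le ht0 with h0 | h0
    · refine ⟨a, ?_⟩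
      have : {d : ↥D | (d : K) ≤ a} = ∅ := by
        ext d; simp only [Set.mem_setOf_eq, Set.mem_empty_iff_false, iff_false, not_le]
        exact d.2.2.1
      rw [hgdef]; simp only [this, Set.image_empty, Real.sSup_empty]; exact h0
    · -- approximate t from below by rationals
      set r : ℕ → ℝ := fun n => t - t / (n + 2) with hrdef
      have hrmono : StrictMono r := by
        intro n m hnm
        have h2 : (0:ℝ) < n + 2 := by positivity
        refine sub_lt_sub_left ?_ t
        apply div_lt_div_of_pos_left h0 h2
        exact_mod_cast by omega
      have hrpos : ∀ n, 0 < r n := by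
        intro n
        have : r 0 ≤ r n := hrmono.monotone (Nat.zero_le n)
        refine lt_of_lt_of_le ?_ this
        have : r 0 = t / 2 := by rw [hrdef]; norm_num; ring
        rw [this]; positivity
      have hrlt : ∀ n, r n < t := fun n => by
        have : 0 < t / (n + 2) := by positivity
        simpa [hrdef] using this
      have hrtend : Tendsto r atTop (nhds t) := by
        have h1 : Tendsto (fun n : ℕ => t / (n + 2)) atTop (nhds 0) := by
          have h := (tendsto_const_div_atTop_nhds_zero_nat t).comp (tendsto_add_atTop_nat 2)
          have heq : (fun n : ℕ => t / (n + 2)) = (fun n : ℕ => t / n) ∘ (fun n => n + 2) := by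
            funext n; simp [Function.comp]
          rw [heq]; exact h
        have := tendsto_const_nhds (x := t) (f := atTop (α := ℕ))
        simpa using this.sub h1
      choose q hq1 hq2 using fun n => exists_rat_btwn (hrmono (lt_add_one n))
      have hqpos : ∀ n, (0:ℚ) < q n := fun n => by
        exact_mod_cast lt_trans (hrpos n) (hq1 n)
      have hqlt1 : ∀ n, (q n : ℚ) < 1 := fun n => by
        exact_mod_cast lt_of_lt_of_le (lt_trans (hq2 n) (hrlt (n+1))) ht1
      have hqltt : ∀ n, (q n : ℝ) < t := fun n => lt_trans (hq2 n) (hrlt (n+1))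
      have hqmono : ∀ n, q n < q (n + 1) := fun n => by
        exact_mod_cast lt_trans (hq2 n) (hq1 (n+1))
      have hqtend : Tendsto (fun n => (q n : ℝ)) atTop (nhds t) := by
        refine tendsto_of_tendsto_of_tendsto_of_le_of_le hrtend tendsto_const_nhds
          (fun n => (hq1 n).le) (fun n => (hqltt n).le)
      set v : ℕ → ↥D := fun n => φ.symm ⟨q n, hqpos n, hqlt1 n⟩ with hvdef
      have hfv : ∀ n, f (v n) = (q n : ℝ) := fun n => by
        simp [hvdef, hfdef, OrderIso.apply_symm_apply]
      set u : ℕ → K := fun n => (v n : K) with hudef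
      have humono : Monotone u := by
        refine monotone_nat_of_le_succ (fun n => ?_)
        exact Subtype.coe_le_coe.mpr (φ.symm.le_iff_le.mpr (Subtype.mk_le_mk.mpr (hqmono n).le))
      obtain ⟨z, hz, -⟩ := hlub u humono
      refine ⟨z, le_antisymm ?_ ?_⟩
      · refine Real.sSup_le (fun w ⟨e, he, hew⟩ => hew ▸ ?_) ht0
        by_contra hcon
        push_neg at hcon
        obtain ⟨q', hq'1, hq'2⟩ := exists_rat_btwn hcon
        have hq'pos : (0:ℚ) < q' := by exact_mod_cast lt_of_le_of_lt ht0 hq'1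
        have hq'lt1 : q' < 1 := by exact_mod_cast lt_trans hq'2 (hf1 e)
        set d' : ↥D := φ.symm ⟨q', hq'pos, hq'lt1⟩ with hd'def
        have hd'e : d' < e := by
          have : (⟨q', hq'pos, hq'lt1⟩ : ↥(Set.Ioo (0:ℚ) 1)) < φ e :=
            Subtype.mk_lt_mk.mpr (by
              exact_mod_cast show (q' : ℝ) < ((φ e : ℚ) : ℝ) from hq'2)
          simpa [hd'def] using φ.symm.lt_iff_lt.mpr this
        have hub : (d' : K) ∈ upperBounds (Set.range u) := by
          rintro w ⟨n, rfl⟩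
          refine Subtype.coe_le_coe.mpr (φ.symm.le_iff_le.mpr (Subtype.mk_le_mk.mpr ?_))
          exact_mod_cast le_of_lt (lt_trans (hqltt n) hq'1)
        have : z ≤ (d' : K) := hz.2 hub
        have : z < (e : K) := lt_of_le_of_lt this (Subtype.coe_lt_coe.mpr hd'e)
        exact absurd he (not_le.mpr this)
      · refine le_of_tendsto hqtend (Eventually.of_forall (fun n => ?_))
        have h := hgle (v n) z (hz.1 ⟨n, rfl⟩)
        rwa [hfv n] at h
  -- assemble the order isomorphism
  set g' : K → ↥(Set.Icc (0:ℝ) 1) := fun x => ⟨g x, hg0 x, hg1 x⟩ with hg'def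
  have hg'mono : StrictMono g' := fun x y h => Subtype.mk_lt_mk.mpr (hgmono h)
  have hg'surj : Function.Surjective g' := by
    rintro ⟨t, ht0, ht1⟩
    obtain ⟨x, hx⟩ := hsurj t ht0 ht1
    exact ⟨x, Subtype.ext hx⟩
  set e₀ : K ≃o ↥(Set.Icc (0:ℝ) 1) := StrictMono.orderIsoOfSurjective g' hg'mono hg'surj
  exact ⟨e₀.toHomeomorph, fun x y => (e₀.le_iff_le).symm⟩
end
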